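/- arXiv:0811.1878 — 6 statements merged into one kernel-verified Lean document; each statement's English description precedes it below -/
import Mathlib

section
/- For any propositional formula φ and any set W of valuations, a valuation w ∈ W satisfies φ if and only if w satisfies the disjunction, over all prime subvaluations v of φ modulo W, of the conjunction of the literals in v. -/
inductive Fml (α : Type) : Type
  | atom : α → Fml α
  | top : Fml α
  | bot : Fml α
  | neg : Fml α → Fml α
  | and : Fml α → Fml α → Fml α
  | or : Fml α → Fml α → Fml α

def Fml.eval {α : Type} (v : α → Bool) : Fml α → Bool
  | .atom p => v p
  | .top => true
  | .bot => false
  | .neg φ => !(Fml.eval v φ)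
  | .and φ ψ => Fml.eval v φ && Fml.eval v ψ
  | .or φ ψ => Fml.eval v φ || Fml.eval v ψ

/-- The set of atoms actually occurring in a formula. -/
def Fml.atoms {α : Type} : Fml α → Set α
  | .atom p => {p}
  | .top => ∅
  | .bot => ∅
  | .neg φ => Fml.atoms φ
  | .and φ ψ => Fml.atoms φ ∪ Fml.atoms ψ
  | .or φ ψ => Fml.atoms φ ∪ Fml.atoms ψ

/-- Classical (propositional) entailment. -/
def Fml.entails {α : Type} (φ ψ : Fml α) : Prop :=
  ∀ v : α → Bool, Fml.eval v φ = true → Fml.eval v ψ = true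

/-- Classical equivalence. -/
def Fml.equiv {α : Type} (φ ψ : Fml α) : Prop :=
  ∀ v : α → Bool, Fml.eval v φ = Fml.eval v ψ

/-- An atom is essential to `φ` iff it occurs in every formula classically equivalent to `φ`. -/
def essential {α : Type} (p : α) (φ : Fml α) : Prop :=
  ∀ ψ : Fml α, Fml.equiv φ ψ → p ∈ Fml.atoms ψ

/-- A valuation `w` extends a subvaluation (set of literals) `v`. -/
def extendsSub {α : Type} (w : α → Bool) (v : Set (α × Bool)) : Prop :=
  ∀ l ∈ v, w l.1 = l.2

/-- A subvaluation: a consistent set of literals (i.e. a subset of some valuation). -/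
def isSubval {α : Type} (v : Set (α × Bool)) : Prop :=
  ∀ p : α, ¬ ((p, true) ∈ v ∧ (p, false) ∈ v)

/-- `v` satisfies `φ` modulo the set of valuations `W`. -/
def satMod {α : Type} (W : Set (α → Bool)) (v : Set (α × Bool)) (φ : Fml α) : Prop :=
  ∀ w ∈ W, extendsSub w v → Fml.eval w φ = true

/-- `v` essentially satisfies `φ` modulo `W`. -/
def essSat {α : Type} (W : Set (α → Bool)) (v : Set (α × Bool)) (φ : Fml α) : Prop :=
  isSubval v ∧ satMod W v φ ∧ ∀ l ∈ v, essential l.1 φ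

/-- `v` is a prime subvaluation of `φ` modulo `W`. -/
def primeSubval {α : Type} (W : Set (α → Bool)) (v : Set (α × Bool)) (φ : Fml α) : Prop :=
  essSat W v φ ∧ ∀ v' : Set (α × Bool), v' ⊂ v → ¬ essSat W v' φ

open Classical in
noncomputable def updV {α : Type} (v : α → Bool) (p : α) (b : Bool) : α → Bool :=
  fun q => if q = p then b else v q

/-- φ depends on atom p. -/
def depOn {α : Type} (p : α) (φ : Fml α) : Prop :=
  ∃ v : α → Bool, Fml.eval v φ ≠ Fml.eval (updV v p (!(v p))) φ

theorem eval_eq_of_agree {α : Type} (φ : Fml α) (v v' : α → Bool)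
    (h : ∀ p ∈ Fml.atoms φ, v p = v' p) : Fml.eval v φ = Fml.eval v' φ := by
  induction φ with
  | atom p => exact h p rfl
  | top => rfl
  | bot => rfl
  | neg ψ ih =>
      simp only [Fml.eval]; rw [ih (fun p hp => h p hp)]
  | and ψ χ ih1 ih2 =>
      simp only [Fml.eval]
      rw [ih1 (fun p hp => h p (Or.inl hp)), ih2 (fun p hp => h p (Or.inr hp))]
  | or ψ χ ih1 ih2 =>
      simp only [Fml.eval]
      rw [ih1 (fun p hp => h p (Or.inl hp)), ih2 (fun p hp => h p (Or.inr hp))]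

theorem eval_updV_of_not_dep {α : Type} (φ : Fml α) (p : α) (h : ¬ depOn p φ)
    (v : α → Bool) (b : Bool) : Fml.eval (updV v p b) φ = Fml.eval v φ := by
  have h' : ∀ u : α → Bool, Fml.eval u φ = Fml.eval (updV u p (!(u p))) φ := by
    intro u; by_contra hc; exact h ⟨u, hc⟩
  by_cases hb : b = v p
  · subst hb
    have hvv : updV v p (v p) = v := by
      funext q; simp only [updV]; split <;> simp_all
    rw [hvv]
  · have hb' : b = !(v p) := by cases b <;> cases hvp : v p <;> simp_all
    subst hb'
    exact (h' v).symm

def atomList {α : Type} : Fml α → List α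
  | .atom p => [p]
  | .top => []
  | .bot => []
  | .neg φ => atomList φ
  | .and φ ψ => atomList φ ++ atomList ψ
  | .or φ ψ => atomList φ ++ atomList ψ

theorem mem_atomList {α : Type} (φ : Fml α) (p : α) :
    p ∈ Fml.atoms φ ↔ p ∈ atomList φ := by
  induction φ with
  | atom q => simp [Fml.atoms, atomList]
  | top => simp [Fml.atoms, atomList]
  | bot => simp [Fml.atoms, atomList]
  | neg ψ ih => simpa [Fml.atoms, atomList] using ih
  | and ψ χ ih1 ih2 => simp [Fml.atoms, atomList, ih1, ih2]
  | or ψ χ ih1 ih2 => simp [Fml.atoms, atomList, ih1, ih2]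

theorem eval_eq_of_agree_dep_aux {α : Type} (φ : Fml α) :
    ∀ (l : List α) (v v' : α → Bool),
      (∀ p ∈ Fml.atoms φ, p ∈ l ∨ v p = v' p) →
      (∀ p, depOn p φ → v p = v' p) →
      Fml.eval v φ = Fml.eval v' φ := by
  intro l
  induction l with
  | nil =>
      intro v v' h1 _h2
      exact eval_eq_of_agree φ v v' (fun p hp => (h1 p hp).resolve_left (by simp))
  | cons q t ih =>
      intro v v' h1 h2
      by_cases hdq : depOn q φ
      · -- then v q = v' q, so q is irrelevant in the list
        have hq : v q = v' q := h2 q hdq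
        apply ih
        · intro p hp
          rcases h1 p hp with h | h
          · rcases List.mem_cons.mp h with rfl | h
            · exact Or.inr hq
            · exact Or.inl h
          · exact Or.inr h
        · exact h2
      · -- change v at q to v' q; eval unchanged
        set v'' := updV v q (v' q) with hv''
        have e1 : Fml.eval v φ = Fml.eval v'' φ :=
          (eval_updV_of_not_dep φ q hdq v (v' q)).symm
        have e2 : Fml.eval v'' φ = Fml.eval v' φ := by
          apply ih
          · intro p hp
            by_cases hpq : p = q
            · subst hpq; right; simp [hv'', updV]
            · rcases h1 p hp with h | h
              · rcases List.mem_cons.mp h with rfl | h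
                · exact absurd rfl hpq
                · exact Or.inl h
              · right; simpa [hv'', updV, hpq] using h
          · intro p hdp
            by_cases hpq : p = q
            · subst hpq; simp [hv'', updV]
            · have := h2 p hdp
              simpa [hv'', updV, hpq] using this
        rw [e1, e2]

theorem eval_eq_of_agree_dep {α : Type} (φ : Fml α) (v v' : α → Bool)
    (h : ∀ p, depOn p φ → v p = v' p) : Fml.eval v φ = Fml.eval v' φ := by
  apply eval_eq_of_agree_dep_aux φ (atomList φ) v v'
  · intro p hp; exact Or.inl ((mem_atomList φ p).mp hp)
  · exact h

theorem essential_of_dep {α : Type} (φ : Fml α) (p : α) (h : depOn p φ) :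
    essential p φ := by
  intro ψ hequiv
  by_contra hp
  obtain ⟨v, hv⟩ := h
  apply hv
  have h1 : Fml.eval v ψ = Fml.eval (updV v p (!(v p))) ψ := by
    apply eval_eq_of_agree
    intro q hq
    have hqp : q ≠ p := fun e => hp (e ▸ hq)
    simp [updV, hqp]
  rw [hequiv v, hequiv (updV v p (!(v p)))]
  exact h1

theorem dep_subset_atoms {α : Type} (φ : Fml α) (p : α) (h : depOn p φ) :
    p ∈ Fml.atoms φ := by
  by_contra hp
  obtain ⟨v, hv⟩ := h
  apply hv
  apply eval_eq_of_agree
  intro q hq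
  have hqp : q ≠ p := fun e => hp (e ▸ hq)
  simp [updV, hqp]

theorem exists_prime_subset {α : Type} (φ : Fml α) (W : Set (α → Bool)) :
    ∀ (n : ℕ) (S : Set (α × Bool)), S.Finite → S.ncard ≤ n → essSat W S φ →
      ∃ v, v ⊆ S ∧ primeSubval W v φ := by
  intro n
  induction n with
  | zero =>
      intro S hfin hcard hess
      have hS : S = ∅ := by
        have := Set.ncard_eq_zero hfin |>.mp (Nat.le_zero.mp hcard)
        exact this
      refine ⟨S, subset_rfl, hess, ?_⟩
      intro v' hv'
      exact absurd (hS ▸ hv') (by simp [Set.ssubset_def])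
  | succ n ih =>
      intro S hfin hcard hess
      by_cases h : ∀ v' : Set (α × Bool), v' ⊂ S → ¬ essSat W v' φ
      · exact ⟨S, subset_rfl, hess, h⟩
      · push_neg at h
        obtain ⟨v', hv'S, hv'ess⟩ := h
        have hfin' : v'.Finite := hfin.subset hv'S.subset
        have hlt : v'.ncard < S.ncard := Set.ncard_lt_ncard hv'S hfin
        obtain ⟨v, hvsub, hvprime⟩ := ih v' hfin' (by omega) hv'ess
        exact ⟨v, hvsub.trans hv'S.subset, hvprime⟩

/-- A valuation `w ∈ W` satisfies `φ` iff it satisfies the disjunction, over all prime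
subvaluations `v` of `φ` modulo `W`, of the conjunction of the literals in `v`. -/
theorem prime_subvaluation_disjunction {α : Type} (φ : Fml α) (W : Set (α → Bool)) :
    ∀ w ∈ W, (Fml.eval w φ = true ↔ ∃ v : Set (α × Bool), primeSubval W v φ ∧ extendsSub w v) := by
  intro w hw
  constructor
  · intro heval
    set S : Set (α × Bool) := {l | depOn l.1 φ ∧ l.2 = w l.1} with hS
    have hSsub : S ⊆ (fun p => (p, w p)) '' {p | depOn p φ} := by
      rintro ⟨p, b⟩ ⟨hd, hb⟩
      exact ⟨p, hd, by simp [hb]; exact hb.symm⟩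
    have hfin : S.Finite := by
      apply Set.Finite.subset _ hSsub
      apply Set.Finite.image
      apply Set.Finite.subset (s := Fml.atoms φ)
      · have : Fml.atoms φ ⊆ {p | p ∈ atomList φ} := by
          intro p hp; exact (mem_atomList φ p).mp hp
        exact Set.Finite.subset (List.finite_toSet _) this
      · intro p hp; exact dep_subset_atoms φ p hp
    have hext : extendsSub w S := by
      rintro ⟨p, b⟩ ⟨_, hb⟩
      exact hb.symm
    have hess : essSat W S φ := by
      refine ⟨?_, ?_, ?_⟩
      · intro p ⟨h1, h2⟩
        have e1 := h1.2; have e2 := h2.2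
        simp at e1 e2; rw [e1] at e2; exact Bool.noConfusion e2
      · intro w' hw' hext'
        have heq : Fml.eval w' φ = Fml.eval w φ := by
          apply eval_eq_of_agree_dep
          intro p hdp
          exact hext' (p, w p) ⟨hdp, rfl⟩
        rw [heq]; exact heval
      · rintro ⟨p, b⟩ ⟨hd, _⟩
        exact essential_of_dep φ p hd
    obtain ⟨v, hvS, hvprime⟩ := exists_prime_subset φ W S.ncard S hfin le_rfl hess
    exact ⟨v, hvprime, fun l hl => hext l (hvS hl)⟩
  · rintro ⟨v, ⟨⟨_, hsat, _⟩, _⟩, hext⟩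
    exact hsat w hw hext
end

section
/- Let M = (W, R) be a PDL-model and φ → ⟨a⟩⊤ an executability law. The set of contraction outcomes Mods⁻(M, φ → ⟨a⟩⊤) is nonempty if and only if φ is satisfiable in some world of W. -/
/-- A PDL-model: a set of possible worlds (propositional valuations) and, for each action,
an accessibility relation on worlds. -/
structure PDLModel (α β : Type) : Type where
  W : Set (α → Bool)
  R : β → Set ((α → Bool) × (α → Bool))

/-- Contraction outcomes of an executability law `φ → ⟨a⟩⊤` from a single model:
same worlds, arrows only removed, removed arrows leave `φ`-worlds, and some world
falsifies `φ → ⟨a⟩⊤`. -/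
def ModsMinusExec {α β : Type} (M : PDLModel α β) (φ : Fml α) (a : β) :
    Set (PDLModel α β) :=
  {M' | M'.W = M.W ∧ (∀ b : β, M'.R b ⊆ M.R b) ∧
        (∀ b : β, ∀ p ∈ M.R b \ M'.R b, Fml.eval p.1 φ = true) ∧
        (∃ w ∈ M'.W, Fml.eval w φ = true ∧ ∀ w', (w, w') ∉ M'.R a)}

/-- `Mods⁻(M, φ → ⟨a⟩⊤)` is nonempty iff `φ` is satisfiable in some world of `W`. -/
theorem modsMinusExec_nonempty_iff {α β : Type} (M : PDLModel α β) (φ : Fml α) (a : β) :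
    (ModsMinusExec M φ a).Nonempty ↔ ∃ w ∈ M.W, Fml.eval w φ = true := by
  constructor
  · rintro ⟨M', _, _, _, w, hw, hφ, _⟩
    exact ⟨w, by rwa [‹M'.W = M.W›] at hw, hφ⟩
  · rintro ⟨w, hw, hφ⟩
    refine ⟨⟨M.W, fun b => {p ∈ M.R b | ¬(b = a ∧ Fml.eval p.1 φ = true)}⟩, rfl,
      fun b => Set.sep_subset _ _, ?_, w, hw, hφ, ?_⟩
    · rintro b ⟨u, v⟩ ⟨h1, h2⟩
      by_contra h
      exact h2 ⟨h1, fun hc => h hc.2⟩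
    · rintro w' ⟨_, h2⟩
      exact h2 ⟨rfl, hφ⟩
end

section
/- An action theory T is modular if and only if its big model is a model of T. -/
/-- Well-formedness: the accessibility relations relate worlds of the model. -/
def PDLModel.wf {α β : Type} (M : PDLModel α β) : Prop :=
  ∀ b : β, ∀ p ∈ M.R b, p.1 ∈ M.W ∧ p.2 ∈ M.W

/-- An action theory: static laws `S`, effect laws `E` (as triples `(φ, ψ, a)` standing for
`φ → [a]ψ`), and executability laws `X` (as pairs `(φ, a)` standing for `φ → ⟨a⟩⊤`). -/
structure Theory (α β : Type) : Type where
  S : Set (Fml α)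
  E : Set (Fml α × Fml α × β)
  X : Set (Fml α × β)

/-- Global truth of a theory in a model: all laws hold at all worlds. -/
def modelsT {α β : Type} (M : PDLModel α β) (T : Theory α β) : Prop :=
  M.wf ∧
  (∀ φ ∈ T.S, ∀ w ∈ M.W, Fml.eval w φ = true) ∧
  (∀ e ∈ T.E, ∀ w ∈ M.W, Fml.eval w e.1 = true →
      ∀ w', (w, w') ∈ M.R e.2.2 → Fml.eval w' e.2.1 = true) ∧
  (∀ x ∈ T.X, ∀ w ∈ M.W, Fml.eval w x.1 = true → ∃ w', (w, w') ∈ M.R x.2)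

/-- Global entailment of a propositional formula. -/
def entailsProp {α β : Type} (T : Theory α β) (φ : Fml α) : Prop :=
  ∀ M : PDLModel α β, modelsT M T → ∀ w ∈ M.W, Fml.eval w φ = true

/-- Modularity: every propositional formula globally entailed by `T` is a classical
consequence of the static laws alone. -/
def modular {α β : Type} (T : Theory α β) : Prop :=
  ∀ φ : Fml α, entailsProp T φ →
    ∀ v : α → Bool, (∀ σ ∈ T.S, Fml.eval v σ = true) → Fml.eval v φ = true

/-- All valuations satisfying the static laws of `T`. -/
def ValS {α β : Type} (T : Theory α β) : Set (α → Bool) :=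
  {v | ∀ σ ∈ T.S, Fml.eval v σ = true}

/-- The big model of `T`: worlds are all valuations of `S`, and `(w, w') ∈ R_a` iff for
every effect law `φ → [a]ψ` of `T`, `w ⊨ φ` implies `w' ⊨ ψ`. -/
def bigModel {α β : Type} (T : Theory α β) : PDLModel α β where
  W := ValS T
  R := fun a =>
    {p | p.1 ∈ ValS T ∧ p.2 ∈ ValS T ∧
      ∀ e ∈ T.E, e.2.2 = a → Fml.eval p.1 e.1 = true → Fml.eval p.2 e.2.1 = true}

/-- literal for a valuation -/
def litFml {α : Type} (w : α → Bool) (p : α) : Fml α :=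
  if w p then .atom p else .neg (.atom p)

lemma litFml_eval {α : Type} (w v : α → Bool) (p : α) :
    Fml.eval v (litFml w p) = true ↔ v p = w p := by
  unfold litFml
  cases h : w p <;> simp [Fml.eval]

def listFml {α : Type} (w : α → Bool) (l : List α) : Fml α :=
  l.foldr (fun p acc => .and (litFml w p) acc) .top

lemma listFml_eval {α : Type} (w v : α → Bool) (l : List α) :
    Fml.eval v (listFml w l) = true ↔ ∀ p ∈ l, v p = w p := by
  induction l with
  | nil => simp [listFml, Fml.eval]
  | cons a l ih =>
      simp [listFml, Fml.eval] at ih ⊢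
      rw [ih, litFml_eval]

/-- characteristic formula of a valuation -/
noncomputable def charFml {α : Type} [Fintype α] (w : α → Bool) : Fml α :=
  listFml w Finset.univ.toList

lemma charFml_eval {α : Type} [Fintype α] (w v : α → Bool) :
    Fml.eval v (charFml w) = true ↔ v = w := by
  rw [charFml, listFml_eval]
  constructor
  · intro h; funext p; exact h p (by simp)
  · intro h p _; rw [h]

/-- An action theory is modular iff its big model is a model of it. -/
theorem modular_iff_bigModel {α β : Type} [Fintype α] [Fintype β] (T : Theory α β) :
    modular T ↔ modelsT (bigModel T) T := by
  constructor
  · intro hmod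
    refine ⟨?_, ?_, ?_, ?_⟩
    · intro b p hp; exact ⟨hp.1, hp.2.1⟩
    · intro φ hφ w hw; exact hw φ hφ
    · intro e he w hw hφ w' hw'
      exact hw'.2.2 e he rfl hφ
    · intro x hx w hw hφ
      by_contra hne
      push_neg at hne
      have hent : entailsProp T (.neg (charFml w)) := by
        intro M hM u hu
        simp only [Fml.eval, Bool.not_eq_true', ← Bool.not_eq_true]
        intro hch
        rw [charFml_eval] at hch
        subst hch
        -- u = w ∈ M.W, derive contradiction
        obtain ⟨w', hw'⟩ := hM.2.2.2 x hx u hu hφ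
        have hw'W : w' ∈ M.W := (hM.1 x.2 _ hw').2
        have hw'S : w' ∈ ValS T := fun σ hσ => hM.2.1 σ hσ w' hw'W
        refine absurd ?_ (hne w')
        refine ⟨fun σ hσ => hM.2.1 σ hσ u hu, hw'S, ?_⟩
        intro e he heq hφe
        exact hM.2.2.1 e he u hu hφe w' (by rw [heq]; exact hw')
      have := hmod _ hent w hw
      simp only [Fml.eval, Bool.not_eq_true'] at this
      rw [← Bool.not_eq_true] at this
      exact this ((charFml_eval w w).mpr rfl)
  · intro hbig φ hφ v hv
    exact hφ (bigModel T) hbig v hv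
end

section
/- If an action theory T is modular and M_big is its big model, then for every model M = (W, R) of T there is a minimal (w.r.t. set inclusion) set R' ⊆ R_big \ R such that (Val(S), R ∪ R') is a model of T, where Val(S) is the set of all valuations satisfying the static laws S of T. -/
/-- Conjunction of a list of formulas. -/
def listConj {α : Type} : List (Fml α) → Fml α
  | [] => .top
  | φ :: l => .and φ (listConj l)

lemma eval_listConj {α : Type} (v : α → Bool) (l : List (Fml α)) :
    Fml.eval v (listConj l) = true ↔ ∀ φ ∈ l, Fml.eval v φ = true := by
  induction l with
  | nil => simp [listConj, Fml.eval]
  | cons φ l ih => simp [listConj, Fml.eval, ih]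

lemma bigModel_models {α β : Type} [Fintype α] [Fintype β] (T : Theory α β)
    (hmod : modular T) : modelsT (bigModel T) T := by
  classical
  refine ⟨fun b p hp => ⟨hp.1, hp.2.1⟩, fun φ hφ w hw => hw φ hφ,
    fun e he w hw hφ w' hw' => hw'.2.2 e he rfl hφ, ?_⟩
  intro x hx w hw hφ
  by_contra hno
  push_neg at hno
  have key : ∀ v : α → Bool, v ∈ ValS T →
      ∃ e ∈ T.E, e.2.2 = x.2 ∧ Fml.eval w e.1 = true ∧ Fml.eval v e.2.1 = false := by
    intro v hv
    by_contra h
    push_neg at h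
    refine hno v ⟨hw, hv, fun e he ha hφe => ?_⟩
    have := h e he ha hφe
    simpa using this
  choose efun hE hA hW hV using key
  haveI : Fintype (α → Bool) := Fintype.ofFinite _
  let guard : (α → Bool) → Fml α := fun v =>
    if h : v ∈ ValS T then (efun v h).1 else Fml.top
  let Φ : Fml α := Fml.and x.1 (listConj ((Finset.univ : Finset (α → Bool)).toList.map guard))
  have hΦ : ∀ u : α → Bool, Fml.eval u Φ = true ↔
      (Fml.eval u x.1 = true ∧ ∀ v : α → Bool, Fml.eval u (guard v) = true) := by
    intro u
    simp [Φ, Fml.eval, eval_listConj, Bool.and_eq_true]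
  have hent : entailsProp T (Fml.neg Φ) := by
    intro M' hM' u hu
    have hfalse : Fml.eval u Φ = false := by
      by_contra hcon
      have hΦt : Fml.eval u Φ = true := by
        cases h : Fml.eval u Φ with
        | false => exact absurd h hcon
        | true => rfl
      obtain ⟨hx1, hall⟩ := (hΦ u).1 hΦt
      obtain ⟨u', hu'⟩ := hM'.2.2.2 x hx u hu hx1
      have hu'W : u' ∈ M'.W := (hM'.1 x.2 (u, u') hu').2
      have hu'S : u' ∈ ValS T := fun σ hσ => hM'.2.1 σ hσ u' hu'W
      have hg := hall u'
      rw [show guard u' = (efun u' hu'S).1 from dif_pos hu'S] at hg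
      have := hM'.2.2.1 (efun u' hu'S) (hE u' hu'S) u hu hg u'
        (by rw [hA u' hu'S]; exact hu')
      rw [hV u' hu'S] at this
      exact Bool.false_ne_true this
    rw [show Fml.eval u (Fml.neg Φ) = !(Fml.eval u Φ) from rfl, hfalse]
    rfl
  have hw' : Fml.eval w (Fml.neg Φ) = true := hmod _ hent w hw
  have hwt : Fml.eval w Φ = true := by
    refine (hΦ w).2 ⟨hφ, fun v => ?_⟩
    by_cases h : v ∈ ValS T
    · rw [show guard v = (efun v h).1 from dif_pos h]; exact hW v h
    · rw [show guard v = Fml.top from dif_neg h]; rfl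
  rw [show Fml.eval w (Fml.neg Φ) = !(Fml.eval w Φ) from rfl, hwt] at hw'
  exact Bool.false_ne_true hw'

/-- If `T` is modular, then every model `M = (W, R)` of `T` admits a minimal (w.r.t. set
inclusion) extension `R' ⊆ R_big \ R` such that `(Val(S), R ∪ R')` is a model of `T`. -/
theorem minimal_extension_exists {α β : Type} [Fintype α] [Fintype β] (T : Theory α β)
    (hmod : modular T) (M : PDLModel α β) (hM : modelsT M T) :
    ∃ R' : β → Set ((α → Bool) × (α → Bool)),
      (∀ b : β, R' b ⊆ (bigModel T).R b \ M.R b) ∧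
      modelsT ⟨ValS T, fun b => M.R b ∪ R' b⟩ T ∧
      (∀ R'' : β → Set ((α → Bool) × (α → Bool)),
        (∀ b : β, R'' b ⊆ (bigModel T).R b \ M.R b) →
        modelsT ⟨ValS T, fun b => M.R b ∪ R'' b⟩ T →
        (∀ b : β, R'' b ⊆ R' b) → R'' = R') := by
  classical
  have hWsub : M.W ⊆ ValS T := fun w hw σ hσ => hM.2.1 σ hσ w hw
  have hRsub : ∀ b, M.R b ⊆ (bigModel T).R b := by
    intro b p hp
    have h1 := hM.1 b p hp
    exact ⟨hWsub h1.1, hWsub h1.2, fun e he ha hφ =>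
      hM.2.2.1 e he p.1 h1.1 hφ p.2 (ha ▸ hp)⟩
  have hbig := bigModel_models T hmod
  set C : Set (β → Set ((α → Bool) × (α → Bool))) :=
    {R' | (∀ b, R' b ⊆ (bigModel T).R b \ M.R b) ∧
      modelsT ⟨ValS T, fun b => M.R b ∪ R' b⟩ T} with hC
  have hCne : C.Nonempty := by
    refine ⟨fun b => (bigModel T).R b \ M.R b, fun b => subset_rfl, ?_⟩
    have heq : (fun b => M.R b ∪ ((bigModel T).R b \ M.R b)) = (bigModel T).R :=
      funext fun b => Set.union_diff_cancel (hRsub b)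
    rw [heq]
    exact hbig
  have hCfin : C.Finite := Set.toFinite C
  obtain ⟨R', hR'C, hmin⟩ : ∃ R' ∈ C, ∀ a' ∈ C, id a' ≤ id R' → id R' = id a' := by
    obtain ⟨R', h⟩ := hCfin.exists_minimal hCne
    exact ⟨R', h.1, fun a' ha' hle => (minimal_iff.1 h).2 ha' hle⟩
  refine ⟨R', hR'C.1, hR'C.2, ?_⟩
  intro R'' h1 h2 hle
  exact (hmin R'' ⟨h1, h2⟩ (fun b => hle b)).symm
end

section
/- Let T be a modular action theory and Φ a law. Then T globally entails Φ if and only if every model of T of the form M' = (Val(S), R') with R ⊆ R' for some model (W, R) of T is a model of Φ. -/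
/-- Laws of an action theory: static laws, effect laws `φ → [a]ψ`, and
executability laws `φ → ⟨a⟩⊤`. -/
inductive Law (α β : Type) : Type
  | static : Fml α → Law α β
  | effect : Fml α → Fml α → β → Law α β
  | exec : Fml α → β → Law α β

/-- Truth of a law at a world of a model. -/
def holdsAt {α β : Type} (M : PDLModel α β) (w : α → Bool) : Law α β → Prop
  | .static φ => Fml.eval w φ = true
  | .effect φ ψ a => Fml.eval w φ = true → ∀ w', (w, w') ∈ M.R a → Fml.eval w' ψ = true
  | .exec φ a => Fml.eval w φ = true → ∃ w', (w, w') ∈ M.R a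

/-- Global truth of a law in a model. -/
def holdsG {α β : Type} (M : PDLModel α β) (L : Law α β) : Prop :=
  ∀ w ∈ M.W, holdsAt M w L

/-- Global entailment of a law by a theory. -/
def entailsT {α β : Type} (T : Theory α β) (L : Law α β) : Prop :=
  ∀ M : PDLModel α β, modelsT M T → holdsG M L

/-- Characteristic conjunction of literals for a valuation over a list of atoms. -/
def chiList {α : Type} (w : α → Bool) : List α → Fml α
  | [] => .top
  | p :: l => .and (if w p then .atom p else .neg (.atom p)) (chiList w l)

lemma chiList_eval {α : Type} (w v : α → Bool) (l : List α) :
    Fml.eval v (chiList w l) = true ↔ ∀ p ∈ l, v p = w p := by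
  induction l with
  | nil => simp [chiList, Fml.eval]
  | cons p l ih =>
    simp only [chiList, Fml.eval, Bool.and_eq_true, ih, List.mem_cons]
    constructor
    · rintro ⟨h1, h2⟩ q hq
      rcases hq with rfl | hq
      · by_cases hw : w q <;> simp [hw, Fml.eval] at h1 <;> simp [h1, hw]
      · exact h2 q hq
    · intro h
      refine ⟨?_, fun q hq => h q (Or.inr hq)⟩
      have := h p (Or.inl rfl)
      by_cases hw : w p <;> simp [hw, Fml.eval, this]

lemma bigModel_exec {α β : Type} [Fintype α] (T : Theory α β) (hmod : modular T)
    (x : Fml α × β) (hx : x ∈ T.X) (w : α → Bool) (hw : w ∈ ValS T)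
    (hφ : Fml.eval w x.1 = true) : ∃ w', (w, w') ∈ (bigModel T).R x.2 := by
  by_contra h
  push_neg at h
  set χ : Fml α := chiList w (Finset.univ.toList) with hχ
  have hent : entailsProp T (.neg χ) := by
    intro N hN u hu
    simp only [Fml.eval, Bool.not_eq_true']
    by_contra huχ
    rw [Bool.not_eq_false, chiList_eval] at huχ
    have huw : u = w := funext fun p => huχ p (by simp)
    subst huw
    obtain ⟨w', hr⟩ := hN.2.2.2 x hx u hu hφ
    have hw' : w' ∈ N.W := (hN.1 x.2 _ hr).2
    have hw'V : w' ∈ ValS T := fun σ hσ => hN.2.1 σ hσ w' hw'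
    refine h w' ⟨hw, hw'V, fun e he hea hφe => ?_⟩
    exact hN.2.2.1 e he u hu hφe w' (hea ▸ hr)
  have := hmod (.neg χ) hent w hw
  simp only [Fml.eval, Bool.not_eq_true'] at this
  rw [← Bool.not_eq_true, chiList_eval] at this
  exact this fun p _ => rfl

/-- For modular `T`, `T` globally entails a law `Φ` iff every model of `T` of the form
`(Val(S), R')` with `R ⊆ R'` for some model `(W, R)` of `T` is a model of `Φ`. -/
theorem entails_iff_valS_models {α β : Type} [Fintype α] [Fintype β] (T : Theory α β)
    (hmod : modular T) (Φ : Law α β) :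
    entailsT T Φ ↔
      ∀ (M : PDLModel α β) (R' : β → Set ((α → Bool) × (α → Bool))),
        modelsT M T → (∀ b : β, M.R b ⊆ R' b) →
        modelsT ⟨ValS T, R'⟩ T → holdsG ⟨ValS T, R'⟩ Φ := by
  constructor
  · intro h M R' _ _ hM'
    exact h ⟨ValS T, R'⟩ hM'
  · intro h M hM
    have hWV : ∀ w ∈ M.W, w ∈ ValS T := fun w hw σ hσ => hM.2.1 σ hσ w hw
    set R' : β → Set ((α → Bool) × (α → Bool)) :=
      fun b => M.R b ∪ {p | p ∈ (bigModel T).R b ∧ p.1 ∉ M.W} with hR'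
    have hM' : modelsT ⟨ValS T, R'⟩ T := by
      refine ⟨?_, ?_, ?_, ?_⟩
      · intro b p hp
        rcases hp with hp | ⟨hp, _⟩
        · exact ⟨hWV _ (hM.1 b p hp).1, hWV _ (hM.1 b p hp).2⟩
        · exact ⟨hp.1, hp.2.1⟩
      · intro φ hφ w hw; exact hw φ hφ
      · intro e he w hw hφ w' hr
        rcases hr with hr | ⟨hr, _⟩
        · exact hM.2.2.1 e he w (hM.1 e.2.2 _ hr).1 hφ w' hr
        · exact hr.2.2 e he rfl hφ
      · intro x hx w hw hφ
        by_cases hwW : w ∈ M.W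
        · obtain ⟨w', hr⟩ := hM.2.2.2 x hx w hwW hφ
          exact ⟨w', Or.inl hr⟩
        · obtain ⟨w', hr⟩ := bigModel_exec T hmod x hx w hw hφ
          exact ⟨w', Or.inr ⟨hr, hwW⟩⟩
    have hΦ := h M R' hM (fun b => Set.subset_union_left) hM'
    intro w hw
    have hwV : w ∈ ValS T := hWV w hw
    cases Φ with
    | static φ => exact hΦ w hwV
    | effect φ ψ a =>
      intro hφ w' hr
      exact hΦ w hwV hφ w' (Or.inl hr)
    | exec φ a =>
      intro hφ
      obtain ⟨w', hr⟩ := hΦ w hwV hφ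
      rcases hr with hr | ⟨_, hnot⟩
      · exact ⟨w', hr⟩
      · exact absurd hw hnot
end

section
/- (Monotonicity of contraction) For every action theory T, every law Φ, and every theory T' in the contracted family T ⊖ Φ produced by the contraction algorithms, T globally entails every formula of T'. -/
/-- The static laws of a theory (here a theory is a set of laws). -/
def statics {α β : Type} (T : Set (Law α β)) : Set (Fml α) :=
  {φ | Law.static φ ∈ T}

/-- Global truth of a theory (a set of laws) in a model. -/
def ModelsL {α β : Type} (M : PDLModel α β) (T : Set (Law α β)) : Prop :=
  M.wf ∧ ∀ L ∈ T, holdsG M L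

/-- Global entailment of a law by a theory. -/
def EntailsL {α β : Type} (T : Set (Law α β)) (L : Law α β) : Prop :=
  ∀ M : PDLModel α β, ModelsL M T → holdsG M L

/-- Modularity: every propositional formula globally entailed by `T` is a classical
consequence of the static laws of `T` alone. -/
def ModularL {α β : Type} (T : Set (Law α β)) : Prop :=
  ∀ φ : Fml α, EntailsL T (Law.static φ) →
    ∀ v : α → Bool, (∀ σ ∈ statics T, Fml.eval v σ = true) → Fml.eval v φ = true

/-- `ContractOut T Φ T'` holds iff `T'` is one of the action theories produced by the
contraction algorithms applied to `T` and the law `Φ`.  If `T ⊭ Φ`, the algorithms return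
`T` unchanged.  Otherwise:
* contracting an executability law `φ → ⟨a⟩⊤` weakens each executability law
  `φᵢ → ⟨a⟩⊤` to `(φᵢ ∧ ¬χ) → ⟨a⟩⊤`, where `χ = π ∧ φ_A` describes (given the static laws)
  a particular `φ`-context;
* contracting an effect law `φ → [a]ψ` replaces each law `φᵢ → [a]ψᵢ` of a selected set
  `Em` of effect laws for `a` by `(φᵢ ∧ ¬χ) → [a]ψᵢ` and `(φᵢ ∧ χ) → [a](ψᵢ ∨ π')`, where
  `χ` is a `φ`-context and `π'` is a prime implicant of `S ∧ ¬ψ`, and adds frame-preserving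
  laws `(χ ∧ ℓ) → [a](ψ ∨ ℓ)` for selected literals `ℓ`;
* contracting a static law `φ` replaces the static laws by some classical contraction
  outcome `Sm` (classically entailed by `S`), weakens each executability law `φᵢ → ⟨a⟩⊤` to
  `(φᵢ ∧ φ) → ⟨a⟩⊤`, and adds `¬φ → [a]⊥` for every action `a`. -/
inductive ContractOut {α β : Type} (T : Set (Law α β)) : Law α β → Set (Law α β) → Prop
  | keep (Φ : Law α β) :
      ¬ EntailsL T Φ → ContractOut T Φ T
  | exec (φ χ : Fml α) (a : β) :
      EntailsL T (Law.exec φ a) →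
      (∀ v : α → Bool, (∀ σ ∈ statics T, Fml.eval v σ = true) →
        Fml.eval v χ = true → Fml.eval v φ = true) →
      ContractOut T (Law.exec φ a)
        ({L ∈ T | ∀ φi : Fml α, L ≠ Law.exec φi a} ∪
         {L | ∃ φi : Fml α, Law.exec φi a ∈ T ∧ L = Law.exec (Fml.and φi (Fml.neg χ)) a})
  | effect (φ ψ χ π' : Fml α) (a : β) (Em : Set (Law α β)) (Lits : Set (Fml α)) :
      EntailsL T (Law.effect φ ψ a) →
      Em ⊆ {L ∈ T | ∃ φi ψi : Fml α, L = Law.effect φi ψi a} →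
      (∀ v : α → Bool, (∀ σ ∈ statics T, Fml.eval v σ = true) →
        Fml.eval v χ = true → Fml.eval v φ = true) →
      (∀ v : α → Bool, (∀ σ ∈ statics T, Fml.eval v σ = true) →
        Fml.eval v π' = true → Fml.eval v ψ = false) →
      ContractOut T (Law.effect φ ψ a)
        ((T \ Em) ∪
         {L | ∃ φi ψi : Fml α, Law.effect φi ψi a ∈ Em ∧
                L = Law.effect (Fml.and φi (Fml.neg χ)) ψi a} ∪
         {L | ∃ φi ψi : Fml α, Law.effect φi ψi a ∈ Em ∧
                L = Law.effect (Fml.and φi χ) (Fml.or ψi π') a} ∪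
         {L | ∃ ℓ ∈ Lits, L = Law.effect (Fml.and χ ℓ) (Fml.or ψ ℓ) a})
  | static (φ : Fml α) (Sm : Set (Fml α)) :
      EntailsL T (Law.static φ) →
      (∀ v : α → Bool, (∀ σ ∈ statics T, Fml.eval v σ = true) →
        ∀ σ' ∈ Sm, Fml.eval v σ' = true) →
      ContractOut T (Law.static φ)
        ({L | ∃ σ ∈ Sm, L = Law.static σ} ∪
         {L ∈ T | (∀ σ : Fml α, L ≠ Law.static σ) ∧ (∀ (φi : Fml α) (a : β), L ≠ Law.exec φi a)} ∪
         {L | ∃ (φi : Fml α) (a : β), Law.exec φi a ∈ T ∧ L = Law.exec (Fml.and φi φ) a} ∪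
         {L | ∃ a : β, L = Law.effect (Fml.neg φ) Fml.bot a})

/-- Monotonicity of contraction: `T` globally entails every formula of every theory
`T' ∈ T ⊖ Φ` produced by the contraction algorithms. -/
theorem contraction_monotonicity {α β : Type} (T : Set (Law α β)) (Φ : Law α β)
    (T' : Set (Law α β)) (h : ContractOut T Φ T') :
    ∀ L ∈ T', EntailsL T L := by
  intro L hL M hM
  obtain ⟨hwf, hall⟩ := hM
  have hstat : ∀ w ∈ M.W, ∀ σ ∈ statics T, Fml.eval w σ = true := by
    intro w hw σ hσ
    exact hall _ hσ w hw
  cases h with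
  | keep Φ hne => exact hall L hL
  | exec φ χ a hent hχφ =>
      rcases hL with hL | ⟨φi, hφiT, rfl⟩
      · exact hall L hL.1
      · intro w hw hev
        simp only [holdsAt, Fml.eval, Bool.and_eq_true] at hev
        exact hall _ hφiT w hw hev.1
  | effect φ ψ χ π' a Em Lits hent hEm hχφ hπ' =>
      rcases hL with ((hL | ⟨φi, ψi, hmem, rfl⟩) | ⟨φi, ψi, hmem, rfl⟩) | ⟨ℓ, hℓ, rfl⟩
      · exact hall L hL.1
      · intro w hw hev w' hR
        simp only [holdsAt, Fml.eval, Bool.and_eq_true] at hev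
        exact hall _ (hEm hmem).1 w hw hev.1 w' hR
      · intro w hw hev w' hR
        simp only [Fml.eval, Bool.and_eq_true] at hev
        have := hall _ (hEm hmem).1 w hw hev.1 w' hR
        simp [Fml.eval, this]
      · intro w hw hev w' hR
        simp only [Fml.eval, Bool.and_eq_true] at hev
        have hφ : Fml.eval w φ = true := hχφ w (hstat w hw) hev.1
        have := hent M ⟨hwf, hall⟩ w hw hφ w' hR
        simp [Fml.eval, this]
  | static φ Sm hent hSm =>
      rcases hL with ((⟨σ, hσ, rfl⟩ | hL) | ⟨φi, a, hφiT, rfl⟩) | ⟨a, rfl⟩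
      · intro w hw
        exact hSm w (hstat w hw) σ hσ
      · exact hall L hL.1
      · intro w hw hev
        simp only [holdsAt, Fml.eval, Bool.and_eq_true] at hev
        exact hall _ hφiT w hw hev.1
      · intro w hw hev
        have hφ : Fml.eval w φ = true := hent M ⟨hwf, hall⟩ w hw
        simp [Fml.eval, hφ] at hev
end
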